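/- Let n and k be integers with 1 ≤ k ≤ n and let M_{n,k} be the join of the empty graph on n−k vertices with the complete graph K_k. Then SO₅(M_{n,k}) = 2π · k(n−k) · ((n−1)² − k²) / (√2 + 2√((n−1)² + k²)). -/

import Mathlib

/-- `f a b = |a² − b²| / (√2 + 2√(a² + b²))`. -/
noncomputable def f (a b : ℝ) : ℝ :=
  |a ^ 2 - b ^ 2| / (Real.sqrt 2 + 2 * Real.sqrt (a ^ 2 + b ^ 2))

theorem f_symm (a b : ℝ) : f a b = f b a := by
  unfold f; rw [abs_sub_comm, add_comm (a ^ 2)]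

/-- The Sombor-index-like invariant `SO₅(G) = 2π · Σ_{uv ∈ E(G)} f(d(u), d(v))`. -/
noncomputable def SO5 {V : Type*} [Fintype V] [DecidableEq V] (G : SimpleGraph V)
    [DecidableRel G.Adj] : ℝ :=
  2 * Real.pi * ∑ e ∈ G.edgeFinset,
    Sym2.lift ⟨fun u v => f (G.degree u) (G.degree v),
      fun u v => f_symm (G.degree u) (G.degree v)⟩ e

/-- `M n k` : the join of the empty graph on `n − k` vertices with the complete graph `K_k`,
realized on `Fin n` with the first `k` vertices forming the clique. -/
def Mgraph (n k : ℕ) : SimpleGraph (Fin n) where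
  Adj u v := u ≠ v ∧ ((u : ℕ) < k ∨ (v : ℕ) < k)
  symm := ⟨fun u v ⟨h1, h2⟩ => ⟨h1.symm, h2.symm⟩⟩
  loopless := ⟨fun v h => h.1 rfl⟩

instance (n k : ℕ) : DecidableRel (Mgraph n k).Adj := fun u v =>
  inferInstanceAs (Decidable (u ≠ v ∧ ((u : ℕ) < k ∨ (v : ℕ) < k)))

open Finset

lemma f_self (a : ℝ) : f a a = 0 := by unfold f; simp

lemma card_lt_filter (n k : ℕ) (hkn : k ≤ n) :
    #(univ.filter fun u : Fin n => (u:ℕ) < k) = k := by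
  rw [show (univ.filter fun u : Fin n => (u:ℕ) < k) =
      (Finset.range k).attachFin (fun m hm => lt_of_lt_of_le (mem_range.mp hm) hkn) by
    ext u; simp [Finset.mem_attachFin]]
  rw [Finset.card_attachFin, Finset.card_range]

lemma Mdeg (n k : ℕ) (hkn : k ≤ n) (u : Fin n) :
    (Mgraph n k).degree u = if (u:ℕ) < k then n - 1 else k := by
  rw [← SimpleGraph.card_neighborFinset_eq_degree, SimpleGraph.neighborFinset_eq_filter]
  by_cases hu : (u:ℕ) < k
  · rw [if_pos hu]
    rw [show (univ.filter ((Mgraph n k).Adj u)) = univ.erase u by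
      ext v
      simp only [mem_filter, mem_univ, true_and, mem_erase]
      constructor
      · exact fun h => ⟨h.1.symm, trivial⟩
      · exact fun h => ⟨h.1.symm, Or.inl hu⟩]
    rw [Finset.card_erase_of_mem (mem_univ u), card_univ, Fintype.card_fin]
  · rw [if_neg hu]
    rw [show (univ.filter ((Mgraph n k).Adj u)) = univ.filter (fun v : Fin n => (v:ℕ) < k) by
      ext v
      simp only [mem_filter, mem_univ, true_and]
      constructor
      · rintro ⟨hne, h | h⟩
        · exact absurd h hu
        · exact h
      · intro hv
        refine ⟨fun h => hu (h ▸ hv), Or.inr hv⟩]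
    exact card_lt_filter n k hkn

/-- `SO₅(M_{n,k}) = 2π · k(n−k) · ((n−1)² − k²)/(√2 + 2√((n−1)² + k²))` for `1 ≤ k ≤ n`. -/
theorem SO5_Mgraph (n k : ℕ) (hk1 : 1 ≤ k) (hkn : k ≤ n) :
    SO5 (Mgraph n k) = 2 * Real.pi * (k * (n - k)) *
      (((n : ℝ) - 1) ^ 2 - (k : ℝ) ^ 2) /
      (Real.sqrt 2 + 2 * Real.sqrt (((n : ℝ) - 1) ^ 2 + (k : ℝ) ^ 2)) := by
  classical
  have hn1 : 1 ≤ n := hk1.trans hkn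
  set G := Mgraph n k with hG
  set F : Sym2 (Fin n) → ℝ := Sym2.lift ⟨fun u v => f (G.degree u) (G.degree v),
      fun u v => f_symm (G.degree u) (G.degree v)⟩ with hF
  set A := univ.filter (fun u : Fin n => (u:ℕ) < k) with hA
  set B := univ.filter (fun u : Fin n => ¬ (u:ℕ) < k) with hB
  have hcardA : #A = k := card_lt_filter n k hkn
  have hcardB : #B = n - k := by
    have h := Finset.card_filter_add_card_filter_not
      (s := (univ : Finset (Fin n))) (p := fun u : Fin n => (u:ℕ) < k)
    rw [card_univ, Fintype.card_fin] at h
    rw [← hA, ← hB] at h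
    omega
  set S := (A ×ˢ B).image (fun p : Fin n × Fin n => s(p.1, p.2)) with hS
  have hmemA : ∀ u : Fin n, u ∈ A ↔ (u:ℕ) < k := by intro u; simp [hA]
  have hmemB : ∀ u : Fin n, u ∈ B ↔ ¬ (u:ℕ) < k := by intro u; simp [hB]
  have hsub : S ⊆ G.edgeFinset := by
    intro e he
    obtain ⟨p, hp, rfl⟩ := Finset.mem_image.mp he
    rw [Finset.mem_product] at hp
    rw [SimpleGraph.mem_edgeFinset, SimpleGraph.mem_edgeSet]
    have h1 := (hmemA p.1).mp hp.1
    have h2 := (hmemB p.2).mp hp.2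
    exact ⟨fun h => h2 (h ▸ h1), Or.inl h1⟩
  have hzero : ∀ e ∈ G.edgeFinset, e ∉ S → F e = 0 := by
    intro e
    induction e using Sym2.ind with
    | _ u v =>
      intro he hns
      rw [SimpleGraph.mem_edgeFinset, SimpleGraph.mem_edgeSet] at he
      obtain ⟨hne, hor⟩ := he
      by_cases hu : (u:ℕ) < k
      · by_cases hv : (v:ℕ) < k
        · -- both in clique: degrees equal
          have : F s(u, v) = f (G.degree u) (G.degree v) := by simp [hF]
          rw [this, Mdeg n k hkn u, Mdeg n k hkn v, if_pos hu, if_pos hv, f_self]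
        · exact absurd (Finset.mem_image.mpr ⟨(u, v),
            Finset.mem_product.mpr ⟨(hmemA u).mpr hu, (hmemB v).mpr hv⟩, rfl⟩) hns
      · have hv : (v:ℕ) < k := hor.resolve_left hu
        exact absurd (Finset.mem_image.mpr ⟨(v, u),
            Finset.mem_product.mpr ⟨(hmemA v).mpr hv, (hmemB u).mpr hu⟩, Sym2.eq_swap (a := v) (b := u)⟩) hns
  have hinj : ∀ p ∈ A ×ˢ B, ∀ q ∈ A ×ˢ B,
      (fun p : Fin n × Fin n => s(p.1, p.2)) p = (fun p : Fin n × Fin n => s(p.1, p.2)) q →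
      p = q := by
    intro p hp q hq h
    rw [Finset.mem_product] at hp hq
    simp only [Sym2.eq_iff] at h
    rcases h with ⟨h1, h2⟩ | ⟨h1, h2⟩
    · exact Prod.ext h1 h2
    · exact absurd (h1 ▸ (hmemA p.1).mp hp.1) ((hmemB q.2).mp hq.2)
  have hval : ∀ p ∈ A ×ˢ B, F s(p.1, p.2) = f ((n : ℝ) - 1) k := by
    rintro ⟨a, b⟩ hp
    rw [Finset.mem_product] at hp
    have h1 := (hmemA a).mp hp.1
    have h2 := (hmemB b).mp hp.2
    have : F s(a, b) = f (G.degree a) (G.degree b) := by simp [hF]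
    rw [this, Mdeg n k hkn a, Mdeg n k hkn b, if_pos h1, if_neg h2]
    congr 1
    push_cast [Nat.cast_sub hn1]
    ring
  have hsum : ∑ e ∈ G.edgeFinset, F e = (k * (n - k) : ℕ) * f ((n : ℝ) - 1) k := by
    rw [← Finset.sum_subset hsub hzero, hS, Finset.sum_image hinj,
      Finset.sum_congr rfl hval, Finset.sum_const, Finset.card_product, hcardA, hcardB,
      nsmul_eq_mul]
  rw [show SO5 G = 2 * Real.pi * ∑ e ∈ G.edgeFinset, F e from rfl, hsum]
  rcases eq_or_lt_of_le hkn with hkeq | hklt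
  · subst hkeq
    simp [f]
  · have hle : (k : ℝ) ≤ (n : ℝ) - 1 := by
      have : (k : ℝ) + 1 ≤ n := by exact_mod_cast hklt
      linarith
    have habs : |((n : ℝ) - 1) ^ 2 - (k : ℝ) ^ 2| = ((n : ℝ) - 1) ^ 2 - (k : ℝ) ^ 2 := by
      apply abs_of_nonneg
      have : (k : ℝ) ^ 2 ≤ ((n : ℝ) - 1) ^ 2 := by
        apply pow_le_pow_left₀ (by positivity) hle
      linarith
    unfold f
    rw [habs]
    push_cast [Nat.cast_sub hkn]
    ring
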